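/- In the energy-to-safety reduction, the bounded energy-tracking construction is sound: if a play in the safety game G_C (states paired with truncated energy levels in {⊥,0,…,C}, starting at credit C, edges updating credit by c ⊕ w(e)) never reaches a state with credit ⊥, then the corresponding play in the original energy game satisfies the energy objective PosEnergy(C), i.e., C + EL(prefix) ≥ 0 for every prefix. -/

import Mathlib

/-- The truncated energy domain `𝒞 = {⊥, 0, …, C}` is modelled inside `ℤ`, with `⊥`
represented by `-1`. `c ⊕ k = min(C, c + k)` if `c ≠ ⊥` and `c + k ≥ 0`, else `⊥`. -/
def oplusC (C : ℕ) (c k : ℤ) : ℤ :=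
  if c ≠ -1 ∧ 0 ≤ c + k then min (C : ℤ) (c + k) else -1

/-- Soundness of the bounded energy-tracking construction: a play of the safety
game `G_C` that never reaches credit `⊥` induces a play of the energy game
satisfying the energy objective `PosEnergy(C)`; indeed the tracked credit is a
lower bound on the true energy level shifted by `C`. -/
theorem energy_to_safety_sound (S : Type) (E : Set (S × S)) (w : S → S → ℤ)
    (C : ℕ) (s : ℕ → S) (c : ℕ → ℤ)
    (hc0 : c 0 = (C : ℤ))
    (hedge : ∀ n, (s n, s (n + 1)) ∈ E)
    (hstep : ∀ n, c (n + 1) = oplusC C (c n) (w (s n) (s (n + 1))))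
    (hsafe : ∀ n, c n ≠ -1) :
    ∀ n, c n ≤ (C : ℤ) + ∑ i ∈ Finset.range n, w (s i) (s (i + 1)) ∧
      0 ≤ (C : ℤ) + ∑ i ∈ Finset.range n, w (s i) (s (i + 1)) := by
  have key : ∀ n, 0 ≤ c n ∧ c n ≤ (C : ℤ) + ∑ i ∈ Finset.range n, w (s i) (s (i + 1)) := by
    intro n
    induction n with
    | zero => simp [hc0]
    | succ n ih =>
      have h := hstep n
      rw [oplusC] at h
      by_cases hcond : c n ≠ -1 ∧ 0 ≤ c n + w (s n) (s (n + 1))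
      · rw [if_pos hcond] at h
        constructor
        · rw [h]; exact le_min (Int.ofNat_nonneg C) hcond.2
        · rw [h, Finset.sum_range_succ, ← add_assoc]
          exact le_trans (min_le_right _ _) (by linarith [ih.2])
      · rw [if_neg hcond] at h
        exact absurd h (hsafe (n + 1))
  intro n
  exact ⟨(key n).2, le_trans (key n).1 (key n).2⟩
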